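/- Let ρ be a density matrix and X Hermitian with 0 ≤ X ≤ I and Tr(Xρ) ≥ 1 − κ. Let 0 < θ < 1 and integers k, d with k ≥ 2d/θ, and define the matrix F(X) = Σ_{r=d+1}^k C(k,r) X^r (I−X)^{k−r}. Then Tr(F(X)ρ) ≥ 1 − κ/(1−θ) − exp(−θ²k/2). -/

import Mathlib

open scoped ComplexOrder

lemma bernoulli_mgf_le (p : ℝ) (hp0 : 0 ≤ p) (hp1 : p ≤ 1) {t : ℝ} (ht : t ≤ 0) :
    1 - p + p * Real.exp t ≤ Real.exp (p * t + t ^ 2 / 8) := by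
  have hE : ∀ x : ℝ, 0 < 1 - p + p * Real.exp x := by
    intro x
    rcases le_total (Real.exp x) 1 with h | h
    · nlinarith [Real.exp_pos x]
    · nlinarith [Real.exp_pos x]
  set f : ℝ → ℝ := fun x => p * x + x ^ 2 / 8 - Real.log (1 - p + p * Real.exp x) with hf
  set g : ℝ → ℝ := fun x => p + x / 4 - p * Real.exp x / (1 - p + p * Real.exp x) with hg
  have hEx : ∀ x : ℝ, HasDerivAt (fun x : ℝ => 1 - p + p * Real.exp x) (p * Real.exp x) x := by
    intro x
    simpa using ((Real.hasDerivAt_exp x).const_mul p).const_add (1 - p)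
  have hfd : ∀ x : ℝ, HasDerivAt f (g x) x := by
    intro x
    have hlog : HasDerivAt (fun x : ℝ => Real.log (1 - p + p * Real.exp x))
        (p * Real.exp x / (1 - p + p * Real.exp x)) x := (hEx x).log (hE x).ne'
    have h2 : HasDerivAt (fun y : ℝ => p * y) p x := by
      simpa using (hasDerivAt_id x).const_mul p
    have h1 : HasDerivAt (fun x : ℝ => p * x + x ^ 2 / 8) (p + x / 4) x := by
      have h3 := h2.add ((hasDerivAt_pow 2 x).div_const 8)
      have e : p + (2:ℕ) * x ^ (2 - 1) / 8 = p + x / 4 := by push_cast; ring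
      rwa [e] at h3
    exact h1.sub hlog
  -- derivative of g
  have hgd : ∀ x : ℝ, HasDerivAt g
      (1 / 4 - p * (1 - p) * Real.exp x / (1 - p + p * Real.exp x) ^ 2) x := by
    intro x
    have hq : HasDerivAt (fun x : ℝ => p * Real.exp x / (1 - p + p * Real.exp x))
        ((p * Real.exp x * (1 - p + p * Real.exp x) -
          p * Real.exp x * (p * Real.exp x)) / (1 - p + p * Real.exp x) ^ 2) x :=
      ((Real.hasDerivAt_exp x).const_mul p).div (hEx x) (hE x).ne'
    have h1 : HasDerivAt (fun x : ℝ => p + x / 4) (1 / 4) x := by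
      simpa using ((hasDerivAt_id x).div_const 4).const_add p
    have h := h1.sub hq
    have heq : 1 / 4 - (p * Real.exp x * (1 - p + p * Real.exp x) -
          p * Real.exp x * (p * Real.exp x)) / (1 - p + p * Real.exp x) ^ 2
        = 1 / 4 - p * (1 - p) * Real.exp x / (1 - p + p * Real.exp x) ^ 2 := by
      have h2 : (0:ℝ) < (1 - p + p * Real.exp x) ^ 2 := pow_pos (hE x) 2
      field_simp
      ring
    rwa [heq] at h
  have hgmono : Monotone g :=
    monotone_of_deriv_nonneg (fun x => (hgd x).differentiableAt) (by
      intro x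
      rw [(hgd x).deriv]
      have h1 : 4 * (p * (1 - p) * Real.exp x) ≤ (1 - p + p * Real.exp x) ^ 2 := by
        nlinarith [sq_nonneg ((1 - p) - p * Real.exp x), Real.exp_pos x]
      have h2 : (0:ℝ) < (1 - p + p * Real.exp x) ^ 2 := pow_pos (hE x) 2
      rw [sub_nonneg, div_le_iff₀ h2]
      nlinarith)
  have hg0 : g 0 = 0 := by
    simp [hg]
  have hgle : ∀ x ≤ (0:ℝ), g x ≤ 0 := fun x hx => hg0 ▸ hgmono hx
  have hfanti : AntitoneOn f (Set.Iic 0) := by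
    apply antitoneOn_of_deriv_nonpos (convex_Iic 0)
    · exact fun x _ => ((hfd x).continuousAt).continuousWithinAt
    · exact fun x _ => ((hfd x).differentiableAt).differentiableWithinAt
    · intro x hx
      rw [(hfd x).deriv]
      exact hgle x (le_of_lt (by simpa using hx))
  have hf0 : f 0 = 0 := by simp [hf]
  have hft : 0 ≤ f t := by
    have := hfanti (Set.mem_Iic.2 ht) (Set.mem_Iic.2 le_rfl) ht
    rwa [hf0] at this
  have hlog : Real.log (1 - p + p * Real.exp t) ≤ p * t + t ^ 2 / 8 := by
    rw [hf] at hft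
    simp only at hft
    linarith
  calc 1 - p + p * Real.exp t = Real.exp (Real.log (1 - p + p * Real.exp t)) :=
        (Real.exp_log (hE t)).symm
    _ ≤ Real.exp (p * t + t ^ 2 / 8) := Real.exp_le_exp.2 hlog

lemma binom_tail (k d : ℕ) (θ p : ℝ) (hθ0 : 0 < θ) (hθp : θ ≤ p) (hp1 : p ≤ 1)
    (hk : 0 < k) (hdk : 2 * (d : ℝ) ≤ θ * k) :
    ∑ r ∈ Finset.range (d + 1), (k.choose r : ℝ) * p ^ r * (1 - p) ^ (k - r)
      ≤ Real.exp (-θ ^ 2 * k / 2) := by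
  have hk0 : (0:ℝ) < k := by exact_mod_cast hk
  have hp0 : 0 ≤ p := le_of_lt (lt_of_lt_of_le hθ0 hθp)
  have hq0 : 0 ≤ 1 - p := by linarith
  set s : ℝ := 4 * (p * k - d) / k with hs_def
  have hΔ : θ * k / 2 ≤ p * k - d := by
    have : θ * k ≤ p * k := by
      apply mul_le_mul_of_nonneg_right hθp (le_of_lt hk0)
    linarith
  have hs0 : 0 ≤ s := by
    apply div_nonneg _ (le_of_lt hk0)
    nlinarith
  have hdk' : (d:ℝ) ≤ k := by nlinarith
  have hd_le_k : d ≤ k := by exact_mod_cast hdk'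
  -- step 1: termwise bound
  have step1 : ∑ r ∈ Finset.range (d + 1), (k.choose r : ℝ) * p ^ r * (1 - p) ^ (k - r)
      ≤ Real.exp (s * d) *
        ∑ r ∈ Finset.range (k + 1), (k.choose r : ℝ) * (p * Real.exp (-s)) ^ r * (1 - p) ^ (k - r) := by
    rw [Finset.mul_sum]
    have hsub : ∑ r ∈ Finset.range (d + 1),
          Real.exp (s * d) * ((k.choose r : ℝ) * (p * Real.exp (-s)) ^ r * (1 - p) ^ (k - r))
        ≤ ∑ r ∈ Finset.range (k + 1),
          Real.exp (s * d) * ((k.choose r : ℝ) * (p * Real.exp (-s)) ^ r * (1 - p) ^ (k - r)) := by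
      apply Finset.sum_le_sum_of_subset_of_nonneg
        (Finset.range_subset_range.2 (Nat.succ_le_succ hd_le_k))
      intro r _ _
      positivity
    refine le_trans (Finset.sum_le_sum ?_) hsub
    intro r hr
    have hr' : (r:ℝ) ≤ d := by
      have := Finset.mem_range.1 hr
      exact_mod_cast Nat.lt_succ_iff.1 this
    have key : (1:ℝ) ≤ Real.exp (s * d) * Real.exp (-s) ^ r := by
      rw [← Real.exp_nat_mul, ← Real.exp_add]
      apply Real.one_le_exp
      have : s * d + r * -s = s * (d - r) := by ring
      rw [this]
      exact mul_nonneg hs0 (by linarith)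
    have hterm : (0:ℝ) ≤ (k.choose r : ℝ) * p ^ r * (1 - p) ^ (k - r) := by positivity
    calc (k.choose r : ℝ) * p ^ r * (1 - p) ^ (k - r)
        = 1 * ((k.choose r : ℝ) * p ^ r * (1 - p) ^ (k - r)) := by ring
      _ ≤ (Real.exp (s * d) * Real.exp (-s) ^ r) *
            ((k.choose r : ℝ) * p ^ r * (1 - p) ^ (k - r)) :=
          mul_le_mul_of_nonneg_right key hterm
      _ = Real.exp (s * d) * ((k.choose r : ℝ) * (p * Real.exp (-s)) ^ r * (1 - p) ^ (k - r)) := by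
          rw [mul_pow]; ring
  -- step 2: binomial theorem
  have step2 : ∑ r ∈ Finset.range (k + 1), (k.choose r : ℝ) * (p * Real.exp (-s)) ^ r * (1 - p) ^ (k - r)
      = (p * Real.exp (-s) + (1 - p)) ^ k := by
    rw [add_pow]
    apply Finset.sum_congr rfl
    intro r _
    ring
  -- step 3: Hoeffding per factor
  have step3 : (p * Real.exp (-s) + (1 - p)) ^ k ≤ Real.exp (p * (-s) + (-s) ^ 2 / 8) ^ k := by
    apply pow_le_pow_left₀ (by positivity)
    have := bernoulli_mgf_le p hp0 hp1 (t := -s) (by linarith)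
    linarith
  -- combine
  have step4 : Real.exp (s * d) * Real.exp (p * (-s) + (-s) ^ 2 / 8) ^ k
      ≤ Real.exp (-θ ^ 2 * k / 2) := by
    rw [← Real.exp_nat_mul, ← Real.exp_add, Real.exp_le_exp]
    have hs_eq : s * k = 4 * (p * k - d) := by
      rw [hs_def, div_mul_cancel₀ _ hk0.ne']
    nlinarith [sq_nonneg (2 * (p * k - (d:ℝ)) - θ * k), hΔ, mul_pos hθ0 hk0, sq_nonneg s]
  calc ∑ r ∈ Finset.range (d + 1), (k.choose r : ℝ) * p ^ r * (1 - p) ^ (k - r)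
      ≤ Real.exp (s * d) * ∑ r ∈ Finset.range (k + 1),
          (k.choose r : ℝ) * (p * Real.exp (-s)) ^ r * (1 - p) ^ (k - r) := step1
    _ = Real.exp (s * d) * (p * Real.exp (-s) + (1 - p)) ^ k := by rw [step2]
    _ ≤ Real.exp (s * d) * Real.exp (p * (-s) + (-s) ^ 2 / 8) ^ k := by
        apply mul_le_mul_of_nonneg_left step3 (le_of_lt (Real.exp_pos _))
    _ ≤ Real.exp (-θ ^ 2 * k / 2) := step4

lemma binom_sum_one (k : ℕ) (t : ℝ) :
    ∑ r ∈ Finset.range (k + 1), (k.choose r : ℝ) * t ^ r * (1 - t) ^ (k - r) = 1 := by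
  have h := add_pow t (1 - t) k
  simp only [add_sub_cancel, one_pow] at h
  calc ∑ r ∈ Finset.range (k + 1), (k.choose r : ℝ) * t ^ r * (1 - t) ^ (k - r)
      = ∑ r ∈ Finset.range (k + 1), t ^ r * (1 - t) ^ (k - r) * (k.choose r : ℝ) := by
        apply Finset.sum_congr rfl; intro r _; ring
    _ = 1 := h.symm

lemma f_lower (k d : ℕ) (θ t : ℝ) (hθ0 : 0 < θ) (hθt : θ ≤ t) (ht1 : t ≤ 1)
    (hk : 0 < k) (hdk : 2 * (d : ℝ) ≤ θ * k) (hd_lt : d + 1 ≤ k + 1) :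
    1 - Real.exp (-θ ^ 2 * k / 2)
      ≤ ∑ r ∈ Finset.Icc (d + 1) k, (k.choose r : ℝ) * t ^ r * (1 - t) ^ (k - r) := by
  have hsplit : ∑ r ∈ Finset.range (d + 1), (k.choose r : ℝ) * t ^ r * (1 - t) ^ (k - r)
      + ∑ r ∈ Finset.Icc (d + 1) k, (k.choose r : ℝ) * t ^ r * (1 - t) ^ (k - r) = 1 := by
    have e1 : (Finset.Icc (d + 1) k) = Finset.Ico (d + 1) (k + 1) := (Finset.Ico_add_one_right_eq_Icc _ _).symm
    rw [e1, Finset.range_eq_Ico,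
      Finset.sum_Ico_consecutive _ (Nat.zero_le (d + 1)) hd_lt, ← Finset.range_eq_Ico,
      binom_sum_one k t]
  have htail := binom_tail k d θ t hθ0 hθt ht1 hk hdk
  linarith

lemma combine (n : ℕ) (lam μ : Fin n → ℝ) (f : ℝ → ℝ) (κ θ ε : ℝ)
    (hθ0 : 0 < θ) (hθ1 : θ < 1) (hε0 : 0 ≤ ε)
    (hμ0 : ∀ i, 0 ≤ μ i) (hμ1 : ∑ i, μ i = 1)
    (hlam1 : ∀ i, lam i ≤ 1)
    (hκ : 1 - κ ≤ ∑ i, lam i * μ i)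
    (hf0 : ∀ i, 0 ≤ f (lam i))
    (hf1 : ∀ i, θ ≤ lam i → 1 - ε ≤ f (lam i)) :
    1 - κ / (1 - θ) - ε ≤ ∑ i, f (lam i) * μ i := by
  have hθ1' : 0 < 1 - θ := by linarith
  have hκ0 : 0 ≤ κ := by
    have h1 : ∑ i, lam i * μ i ≤ ∑ i, μ i :=
      Finset.sum_le_sum fun i _ => by nlinarith [hμ0 i, hlam1 i]
    rw [hμ1] at h1; linarith
  have hc0 : 0 ≤ κ / (1 - θ) := div_nonneg hκ0 hθ1'.le
  have hsum0 : 0 ≤ ∑ i, f (lam i) * μ i :=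
    Finset.sum_nonneg fun i _ => mul_nonneg (hf0 i) (hμ0 i)
  rcases le_total 1 ε with hε1 | hε1
  · linarith
  have hκ0' : 0 ≤ κ := by
    have h1 : ∑ i, lam i * μ i ≤ ∑ i, μ i :=
      Finset.sum_le_sum fun i _ => by nlinarith [hμ0 i, hlam1 i]
    rw [hμ1] at h1; linarith
  set B := Finset.univ.filter (fun i : Fin n => lam i < θ) with hB
  have hBsum : ∑ i ∈ B, μ i ≤ κ / (1 - θ) := by
    rw [le_div_iff₀ hθ1']
    have h1 : ∑ i ∈ B, μ i * (1 - θ) ≤ ∑ i ∈ B, (1 - lam i) * μ i :=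
      Finset.sum_le_sum fun i hi => by
        have := (Finset.mem_filter.1 hi).2
        nlinarith [hμ0 i]
    have h2 : ∑ i ∈ B, (1 - lam i) * μ i ≤ ∑ i, (1 - lam i) * μ i := by
      apply Finset.sum_le_sum_of_subset_of_nonneg (Finset.filter_subset _ _)
      intro i _ _
      nlinarith [hμ0 i, hlam1 i]
    have h3 : ∑ i, (1 - lam i) * μ i = (∑ i, μ i) - ∑ i, lam i * μ i := by
      rw [← Finset.sum_sub_distrib]
      apply Finset.sum_congr rfl; intro i _; ring
    rw [hμ1] at h3
    calc (∑ i ∈ B, μ i) * (1 - θ) = ∑ i ∈ B, μ i * (1 - θ) := by rw [Finset.sum_mul]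
      _ ≤ ∑ i ∈ B, (1 - lam i) * μ i := h1
      _ ≤ ∑ i, (1 - lam i) * μ i := h2
      _ = 1 - ∑ i, lam i * μ i := h3
      _ ≤ κ := by linarith
  have hsplit : ∑ i ∈ B, μ i + ∑ i ∈ Bᶜ, μ i = 1 := by
    rw [Finset.sum_add_sum_compl]  -- maybe wrong name/order
    exact hμ1
  have hε1 : ε ≤ 1 → True := fun _ => trivial
  have hgood : ∑ i ∈ Bᶜ, (1 - ε) * μ i ≤ ∑ i ∈ Bᶜ, f (lam i) * μ i := by
    apply Finset.sum_le_sum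
    intro i hi
    have hiθ : θ ≤ lam i := by
      have := Finset.mem_compl.1 hi
      simp only [hB, Finset.mem_filter, Finset.mem_univ, true_and, not_lt] at this
      exact this
    exact mul_le_mul_of_nonneg_right (hf1 i hiθ) (hμ0 i)
  have hall : ∑ i ∈ Bᶜ, f (lam i) * μ i ≤ ∑ i, f (lam i) * μ i := by
    apply Finset.sum_le_sum_of_subset_of_nonneg (Finset.subset_univ _)
    intro i _ _
    exact mul_nonneg (hf0 i) (hμ0 i)
  have hBc : ∑ i ∈ Bᶜ, μ i = 1 - ∑ i ∈ B, μ i := by linarith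
  have h5 : (1 - ε) * (1 - κ / (1 - θ)) ≤ ∑ i ∈ Bᶜ, (1 - ε) * μ i := by
    rw [← Finset.mul_sum, hBc]
    apply mul_le_mul_of_nonneg_left (by linarith) (by linarith)
  nlinarith [h5, hgood, hall, mul_nonneg hε0 hc0]

/-- Let `ρ` be a density matrix and `X` Hermitian with
`0 ≤ X ≤ I` and `Tr(Xρ) ≥ 1 − κ`.  Let `0 < θ < 1` and `k, d` positive integers
with `k ≥ 2d/θ`, and define (by functional calculus, i.e. polynomially in `X`)
`F(X) = ∑_{r=d+1}^k C(k,r) X^r (I−X)^{k−r}`.  Then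
`Tr(F(X)ρ) ≥ 1 − κ/(1−θ) − exp(−θ²k/2)`. -/
theorem trace_binomial_functional_calculus (n : ℕ)
    (ρ X : Matrix (Fin n) (Fin n) ℂ)
    (hρ : ρ.PosSemidef) (hρtr : ρ.trace = 1)
    (hX : X.PosSemidef) (hXI : ((1 : Matrix (Fin n) (Fin n) ℂ) - X).PosSemidef)
    (κ θ : ℝ) (k d : ℕ)
    (hθ0 : 0 < θ) (hθ1 : θ < 1) (hk : 0 < k) (hd : 0 < d)
    (hkd : 2 * (d : ℝ) / θ ≤ (k : ℝ))
    (htr : 1 - κ ≤ ((X * ρ).trace).re) :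
    1 - κ / (1 - θ) - Real.exp (-θ ^ 2 * k / 2) ≤
      (((∑ r ∈ Finset.Icc (d + 1) k,
            (k.choose r : ℂ) • (X ^ r * (1 - X) ^ (k - r))) * ρ).trace).re := by
  classical
  have hH : X.IsHermitian := hX.1
  set U : Matrix (Fin n) (Fin n) ℂ := (hH.eigenvectorUnitary : Matrix (Fin n) (Fin n) ℂ) with hU
  set lam : Fin n → ℝ := hH.eigenvalues with hlam
  set lamC : Fin n → ℂ := RCLike.ofReal ∘ hH.eigenvalues with hlamC
  have hsU : star U * U = 1 := Matrix.UnitaryGroup.star_mul_self _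
  have hUs : U * star U = 1 := Matrix.mem_unitaryGroup_iff.1 hH.eigenvectorUnitary.2
  have hXspec : X = U * Matrix.diagonal lamC * star U := hH.spectral_theorem
  have hXdiag : star U * X * U = Matrix.diagonal lamC := by
    have := hH.conjStarAlgAut_star_eigenvectorUnitary
    rw [Unitary.conjStarAlgAut_star_apply] at this
    exact this
  set ρ' : Matrix (Fin n) (Fin n) ℂ := star U * ρ * U with hρ'def
  -- conjugation multiplicativity
  have hmul : ∀ g h : Fin n → ℂ,
      (U * Matrix.diagonal g * star U) * (U * Matrix.diagonal h * star U)
        = U * Matrix.diagonal (g * h) * star U := by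
    intro g h
    have e : (U * Matrix.diagonal g * star U) * (U * Matrix.diagonal h * star U)
        = U * (Matrix.diagonal g * ((star U * U) * Matrix.diagonal h)) * star U := by
      simp only [Matrix.mul_assoc]
    rw [e, hsU, Matrix.one_mul, Matrix.diagonal_mul_diagonal]
    rfl
  have hone : ∀ g : Fin n → ℂ, g = 1 → U * Matrix.diagonal g * star U = 1 := by
    intro g hg
    rw [hg, show Matrix.diagonal (1 : Fin n → ℂ) = 1 from Matrix.diagonal_one,
      Matrix.mul_one, hUs]
  have hpow : ∀ (g : Fin n → ℂ) (r : ℕ),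
      (U * Matrix.diagonal g * star U) ^ r = U * Matrix.diagonal (g ^ r) * star U := by
    intro g r
    induction r with
    | zero => rw [pow_zero, (hone (g ^ 0) (by rw [pow_zero])).symm]
    | succ m ih => rw [pow_succ, ih, hmul, ← pow_succ]
  have h1Xspec : (1 : Matrix (Fin n) (Fin n) ℂ) - X = U * Matrix.diagonal (1 - lamC) * star U := by
    have e : U * Matrix.diagonal (1 - lamC) * star U
        = U * (Matrix.diagonal 1 - Matrix.diagonal lamC) * star U := by
      rw [Matrix.diagonal_sub]; rfl
    rw [e, show Matrix.diagonal (1 : Fin n → ℂ) = 1 from Matrix.diagonal_one,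
      Matrix.mul_sub, Matrix.sub_mul, Matrix.mul_one, hUs, ← hXspec]
  -- trace formula
  have htrace : ∀ g : Fin n → ℂ,
      ((U * Matrix.diagonal g * star U) * ρ).trace = ∑ i, g i * ρ' i i := by
    intro g
    have e1 : (U * Matrix.diagonal g * star U) * ρ = (U * Matrix.diagonal g) * (star U * ρ) := by
      rw [Matrix.mul_assoc]
    have e2 : (star U * ρ) * (U * Matrix.diagonal g) = (star U * ρ * U) * Matrix.diagonal g := by
      simp only [Matrix.mul_assoc]
    rw [e1, Matrix.trace_mul_comm, e2, Matrix.trace_mul_comm, ← hρ'def]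
    simp [Matrix.trace, Matrix.diag, Matrix.diagonal_mul]
  -- ρ' is psd with real diagonal
  have hρ'psd : ρ'.PosSemidef := by
    rw [hρ'def, Matrix.star_eq_conjTranspose]
    exact hρ.conjTranspose_mul_mul_same U
  have hdiag_nonneg : ∀ i, 0 ≤ ρ' i i := by
    intro i
    exact hρ'psd.diag_nonneg
  set μ : Fin n → ℝ := fun i => (ρ' i i).re with hμdef
  have hρ'diag : ∀ i, ρ' i i = (μ i : ℂ) := by
    intro i
    have h := Complex.nonneg_iff.1 (hdiag_nonneg i)
    exact Complex.ext rfl (by simp [h.2])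
  have hμ0 : ∀ i, 0 ≤ μ i := fun i => (Complex.nonneg_iff.1 (hdiag_nonneg i)).1
  have hμsum : ∑ i, μ i = 1 := by
    have h1 : ρ'.trace = 1 := by
      rw [hρ'def, Matrix.trace_mul_cycle, hUs, Matrix.one_mul, hρtr]
    have h2 := congrArg Complex.re h1
    rw [Matrix.trace] at h2
    simpa [Matrix.diag, Complex.re_sum, hμdef] using h2
  -- eigenvalue bounds
  have hlam0 : ∀ i, 0 ≤ lam i := fun i => hX.eigenvalues_nonneg i
  have hlam1' : ∀ i, lam i ≤ 1 := by
    intro i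
    have hconj : star U * ((1 : Matrix (Fin n) (Fin n) ℂ) - X) * U
        = 1 - Matrix.diagonal lamC := by
      rw [Matrix.mul_sub, Matrix.sub_mul, Matrix.mul_one, hsU, hXdiag]
    have hpsd : (star U * ((1 : Matrix (Fin n) (Fin n) ℂ) - X) * U).PosSemidef := by
      rw [Matrix.star_eq_conjTranspose]
      exact hXI.conjTranspose_mul_mul_same U
    rw [hconj] at hpsd
    have := hpsd.diag_nonneg (i := i)
    have h2 : (0:ℂ) ≤ (1 - Matrix.diagonal lamC) i i := by
      exact hpsd.diag_nonneg
    have h3 : ((1 : Matrix (Fin n) (Fin n) ℂ) - Matrix.diagonal lamC) i i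
        = ((1 - lam i : ℝ) : ℂ) := by
      simp [Matrix.sub_apply, Matrix.one_apply_eq, Matrix.diagonal_apply_eq, hlamC, hlam]
    rw [h3] at h2
    have := (Complex.nonneg_iff.1 h2).1
    simp at this
    linarith
  -- trace of X * ρ
  have htrX : ((X * ρ).trace).re = ∑ i, lam i * μ i := by
    rw [hXspec, htrace lamC]
    rw [Complex.re_sum]
    apply Finset.sum_congr rfl
    intro i _
    rw [hρ'diag i]
    simp [hlamC, hlam]
  -- trace of the F(X) ρ
  have hgoal : (((∑ r ∈ Finset.Icc (d + 1) k,
        (k.choose r : ℂ) • (X ^ r * (1 - X) ^ (k - r))) * ρ).trace).re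
      = ∑ i, (∑ r ∈ Finset.Icc (d + 1) k,
          (k.choose r : ℝ) * (lam i) ^ r * (1 - lam i) ^ (k - r)) * μ i := by
    have hterm : ∀ r : ℕ, X ^ r * (1 - X) ^ (k - r)
        = U * Matrix.diagonal (lamC ^ r * (1 - lamC) ^ (k - r)) * star U := by
      intro r
      rw [h1Xspec, hXspec, hpow, hpow, hmul]
    have hlamCval : ∀ (i : Fin n) (r : ℕ), (lamC ^ r * (1 - lamC) ^ (k - r)) i
        = (((lam i) ^ r * (1 - lam i) ^ (k - r) : ℝ) : ℂ) := by
      intro i r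
      simp only [Pi.mul_apply, Pi.pow_apply, Pi.sub_apply, Pi.one_apply, hlamC,
        Function.comp_apply]
      push_cast
      rw [hlam]
      rfl
    calc (((∑ r ∈ Finset.Icc (d + 1) k,
            (k.choose r : ℂ) • (X ^ r * (1 - X) ^ (k - r))) * ρ).trace).re
        = (∑ r ∈ Finset.Icc (d + 1) k,
            (k.choose r : ℂ) * ∑ i, (lamC ^ r * (1 - lamC) ^ (k - r)) i * ρ' i i).re := by
          rw [Finset.sum_mul, Matrix.trace_sum]
          congr 1
          apply Finset.sum_congr rfl
          intro r _
          rw [smul_mul_assoc, Matrix.trace_smul, smul_eq_mul, hterm r, htrace]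
      _ = ∑ r ∈ Finset.Icc (d + 1) k, ∑ i,
            (k.choose r : ℝ) * (lam i) ^ r * (1 - lam i) ^ (k - r) * μ i := by
          rw [Complex.re_sum]
          apply Finset.sum_congr rfl
          intro r _
          rw [Finset.mul_sum, Complex.re_sum]
          apply Finset.sum_congr rfl
          intro i _
          rw [hρ'diag i, hlamCval i r]
          rw [← Complex.ofReal_re
            ((k.choose r : ℝ) * lam i ^ r * (1 - lam i) ^ (k - r) * μ i)]
          congr 1
          push_cast
          ring
      _ = ∑ i, (∑ r ∈ Finset.Icc (d + 1) k,
            (k.choose r : ℝ) * (lam i) ^ r * (1 - lam i) ^ (k - r)) * μ i := by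
          rw [Finset.sum_comm]
          apply Finset.sum_congr rfl
          intro i _
          rw [Finset.sum_mul]
  rw [hgoal]
  have hdk : 2 * (d:ℝ) ≤ θ * k := by
    rw [div_le_iff₀ hθ0] at hkd
    linarith
  have hd_lt : d + 1 ≤ k + 1 := by
    have : (d:ℝ) ≤ k := by nlinarith
    have := Nat.cast_le (α := ℝ) |>.1 this
    omega
  apply combine n lam μ
    (fun t => ∑ r ∈ Finset.Icc (d + 1) k, (k.choose r : ℝ) * t ^ r * (1 - t) ^ (k - r))
    κ θ _ hθ0 hθ1 (Real.exp_pos _).le hμ0 hμsum hlam1' (htrX ▸ htr)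
  · intro i
    apply Finset.sum_nonneg
    intro r hr
    have h1 : (0:ℝ) ≤ 1 - lam i := by linarith [hlam1' i]
    have h0 := hlam0 i
    positivity
  · intro i hθi
    exact f_lower k d θ (lam i) hθ0 hθi (hlam1' i) hk hdk hd_lt
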